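/- If Q is a complex polynomial of degree less than n and P is a monic polynomial of degree n, then the average of Q over the n roots (with multiplicity) of P(Y) = P(z) is constant in z. -/

import Mathlib

open Polynomial Multiset Finset

-- Newton's identity for multisets
lemma multiset_newton (s : Multiset ℂ) (k : ℕ) (hk : 0 < k) :
    (s.map (· ^ k)).sum = (-1) ^ (k + 1) * k * s.esymm k -
      ∑ a ∈ Finset.HasAntidiagonal.antidiagonal k with a.1 ∈ Set.Ioo 0 k,
        (-1) ^ a.1 * s.esymm a.1 * (s.map (· ^ a.2)).sum := by
  obtain ⟨l, rfl⟩ : ∃ l : List ℂ, (l : Multiset ℂ) = s := ⟨s.toList, s.coe_toList⟩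
  have key := congrArg (MvPolynomial.aeval l.get)
    (MvPolynomial.psum_eq_mul_esymm_sub_sum (Fin l.length) ℂ k hk)
  have huniv : (Finset.univ.val.map l.get : Multiset ℂ) = (l : Multiset ℂ) := by
    rw [Fin.univ_val_map, List.ofFn_get]
  have hps : ∀ m : ℕ, MvPolynomial.aeval l.get (MvPolynomial.psum (Fin l.length) ℂ m)
      = ((l : Multiset ℂ).map (· ^ m)).sum := by
    intro m
    rw [MvPolynomial.psum, map_sum, ← huniv, Multiset.map_map]
    simp [Finset.sum]
  have hes : ∀ m : ℕ, MvPolynomial.aeval l.get (MvPolynomial.esymm (Fin l.length) ℂ m)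
      = (l : Multiset ℂ).esymm m := by
    intro m
    rw [MvPolynomial.aeval_esymm_eq_multiset_esymm, huniv]
  rw [hps] at key
  rw [key]
  simp only [map_sub, map_mul, map_sum, map_pow, map_neg, map_one, map_natCast, hes, hps]

lemma psum_congr_of_esymm (s t : Multiset ℂ) (hcard : Multiset.card s = Multiset.card t) :
    ∀ k : ℕ, (∀ i, 0 < i → i ≤ k → s.esymm i = t.esymm i) →
      (s.map (· ^ k)).sum = (t.map (· ^ k)).sum := by
  intro k
  induction k using Nat.strong_induction_on with
  | _ k ih =>
    intro he
    rcases Nat.eq_zero_or_pos k with rfl | hk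
    · simp [hcard]
    · rw [multiset_newton s k hk, multiset_newton t k hk, he k hk le_rfl]
      congr 1
      refine Finset.sum_congr rfl ?_
      rintro ⟨a, b⟩ hab
      simp only [Finset.mem_filter, Finset.HasAntidiagonal.mem_antidiagonal, Set.mem_Ioo] at hab
      obtain ⟨hab, ha0, hak⟩ := hab
      have hb : b < k := by omega
      rw [he a ha0 (by omega), ih b hb (fun i hi hib => he i hi (by omega))]

lemma map_sum_swap (s : Multiset ℂ) (n : ℕ) (c : ℕ → ℂ) :
    (s.map fun w => ∑ k ∈ Finset.range n, c k * w ^ k).sum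
      = ∑ k ∈ Finset.range n, c k * (s.map (· ^ k)).sum := by
  induction s using Multiset.induction with
  | empty => simp
  | cons a s ih => simp [ih, Finset.sum_add_distrib, mul_add]

theorem stmt_7 (P : Polynomial ℂ) (hP : P.Monic) (n : ℕ) (hn : P.natDegree = n)
    (hn1 : 1 ≤ n) (Q : Polynomial ℂ) (hQ : Q.natDegree < n) :
    ∃ c : ℂ, ∀ z : ℂ,
      (((P - Polynomial.C (P.eval z)).roots).map Q.eval).sum = n • c := by
  have hdegpos : 0 < P.degree := by
    rw [← Polynomial.natDegree_pos_iff_degree_pos]; omega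
  have hmon : ∀ z : ℂ, (P - Polynomial.C (P.eval z)).Monic := fun z =>
    hP.sub_of_left (lt_of_le_of_lt Polynomial.degree_C_le hdegpos)
  have hnd : ∀ z : ℂ, (P - Polynomial.C (P.eval z)).natDegree = n := by
    intro z; rw [Polynomial.natDegree_sub_C, hn]
  have hcard : ∀ z : ℂ, Multiset.card (P - Polynomial.C (P.eval z)).roots = n := by
    intro z
    rw [← hnd z]
    exact Polynomial.splits_iff_card_roots.mp (IsAlgClosed.splits _)
  have hes : ∀ z : ℂ, ∀ i : ℕ, 0 < i → i < n →
      (P - Polynomial.C (P.eval z)).roots.esymm i = (-1) ^ i * P.coeff (n - i) := by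
    intro z i hi0 hin
    have hkey := Polynomial.coeff_eq_esymm_roots_of_card
      (p := P - Polynomial.C (P.eval z)) (by rw [hcard z, hnd z]) (k := n - i)
      (by rw [hnd z]; omega)
    rw [(hmon z).leadingCoeff, hnd z] at hkey
    have h2 : n - (n - i) = i := by omega
    rw [h2, one_mul] at hkey
    have hc : (P - Polynomial.C (P.eval z)).coeff (n - i) = P.coeff (n - i) := by
      rw [Polynomial.coeff_sub, Polynomial.coeff_C, if_neg (by omega), sub_zero]
    rw [hc] at hkey
    rw [hkey, ← mul_assoc, ← pow_add,
      show ((-1 : ℂ)) ^ (i + i) = 1 by rw [← two_mul, pow_mul]; norm_num ,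
      one_mul]
  -- the sum over roots, expanded
  have hsum : ∀ z : ℂ, (((P - Polynomial.C (P.eval z)).roots).map Q.eval).sum
      = ∑ k ∈ Finset.range n, Q.coeff k *
        (((P - Polynomial.C (P.eval z)).roots).map (· ^ k)).sum := by
    intro z
    rw [← map_sum_swap]
    congr 1
    apply Multiset.map_congr rfl
    intro w _
    exact Polynomial.eval_eq_sum_range' hQ w
  refine ⟨(((P - Polynomial.C (P.eval 0)).roots).map Q.eval).sum / n, fun z => ?_⟩
  have heq : (((P - Polynomial.C (P.eval z)).roots).map Q.eval).sum
      = (((P - Polynomial.C (P.eval 0)).roots).map Q.eval).sum := by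
    rw [hsum z, hsum 0]
    refine Finset.sum_congr rfl fun k hk => ?_
    rw [Finset.mem_range] at hk
    congr 1
    refine psum_congr_of_esymm _ _ (by rw [hcard, hcard]) k fun i hi0 hik => ?_
    rw [hes z i hi0 (by omega), hes 0 i hi0 (by omega)]
  rw [heq, nsmul_eq_mul]
  have hn0 : (n : ℂ) ≠ 0 := Nat.cast_ne_zero.mpr (by omega)
  field_simp
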